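/- Let f(z) = (z(1+λ²) - iλz² - iλ)/(λz² - i(1+λ²)z + λ) for 0 < λ < 1 and set z₁ = -λ, z₂ = λ, w₁ = f(z₁) = -1, w₂ = f(z₂) = 1. Then equality holds in the inequality Re{ Σ_{k=1}² S_f(z_k)(w₂-w₁)²/(6 f'(z_k)²) + 2(w₂-w₁)²/(f'(z₁)f'(z₂)(z₁-z₂)²) + 2|w₂-w₁|²/(f'(z₁) conj(f'(z₂)) (1 - z₁ z̄₂)²) } ≤ 2 + |w₂-w₁|²/(|f'(z₁)|²(1-|z₁|²)²) + |w₂-w₁|²/(|f'(z₂)|²(1-|z₂|²)²). -/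

import Mathlib

open Complex

/-- The Schwarzian derivative `S_f = (f''/f')' - (1/2)(f''/f')²`. -/
noncomputable def schwarzian (f : ℂ → ℂ) (z : ℂ) : ℂ :=
  deriv (fun w => deriv (deriv f) w / deriv f w) z -
    (1 / 2) * (deriv (deriv f) z / deriv f z) ^ 2

noncomputable def DD (l z : ℂ) : ℂ := l * z ^ 2 - I * (1 + l ^ 2) * z + l
noncomputable def DDp (l z : ℂ) : ℂ := 2 * l * z - I * (1 + l ^ 2)
noncomputable def gg (l z : ℂ) : ℂ := 2 * (1 + l ^ 2) * l * (1 - z ^ 2) / (DD l z) ^ 2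
noncomputable def nn (l z : ℂ) : ℂ := (-2 * z) * DD l z - 2 * (1 - z ^ 2) * DDp l z
noncomputable def ggp (l z : ℂ) : ℂ := 2 * (1 + l ^ 2) * l * nn l z / (DD l z) ^ 3
noncomputable def hh (l z : ℂ) : ℂ := nn l z / ((1 - z ^ 2) * DD l z)
noncomputable def nnp (l z : ℂ) : ℂ := -2 * DD l z + 2 * z * DDp l z - 4 * l * (1 - z ^ 2)
noncomputable def ddp (l z : ℂ) : ℂ := -2 * z * DD l z + (1 - z ^ 2) * DDp l z
noncomputable def hhp (l z : ℂ) : ℂ :=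
  (nnp l z * ((1 - z ^ 2) * DD l z) - nn l z * ddp l z) / ((1 - z ^ 2) * DD l z) ^ 2

lemma hasDerivAt_DD (l z : ℂ) : HasDerivAt (DD l) (DDp l z) z := by
  have h1 := ((hasDerivAt_pow 2 z).const_mul l)
  have h2 := (hasDerivAt_id z).const_mul (I * (1 + l ^ 2))
  have := (h1.sub h2).add_const l
  refine this.congr_deriv ?_
  simp only [DDp]
  push_cast
  ring

lemma hasDerivAt_NN (l z : ℂ) :
    HasDerivAt (fun w : ℂ => w * (1 + l ^ 2) - I * l * w ^ 2 - I * l)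
      ((1 + l ^ 2) - 2 * I * l * z) z := by
  have h1 := (hasDerivAt_id z).mul_const (1 + l ^ 2)
  have h2 := (hasDerivAt_pow 2 z).const_mul (I * l)
  have := (h1.sub h2).sub_const (I * l)
  refine this.congr_deriv ?_
  push_cast
  ring

lemma wronskian (l z : ℂ) :
    ((1 + l ^ 2) - 2 * I * l * z) * DD l z
      - (z * (1 + l ^ 2) - I * l * z ^ 2 - I * l) * DDp l z
      = 2 * (1 + l ^ 2) * l * (1 - z ^ 2) := by
  simp only [DD, DDp]
  linear_combination ((1 + l ^ 2) * l * (z ^ 2 - 1)) * Complex.I_sq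

lemma hasDerivAt_f (l : ℂ) (f : ℂ → ℂ)
    (hf : ∀ z : ℂ, f z = (z * (1 + l ^ 2) - I * l * z ^ 2 - I * l) /
      (l * z ^ 2 - I * (1 + l ^ 2) * z + l))
    {z : ℂ} (hz : DD l z ≠ 0) : HasDerivAt f (gg l z) z := by
  have hfD : f = fun w => (w * (1 + l ^ 2) - I * l * w ^ 2 - I * l) / DD l w := by
    funext w; rw [hf w]; rfl
  rw [hfD]
  have h := (hasDerivAt_NN l z).div (hasDerivAt_DD l z) hz
  refine h.congr_deriv ?_
  rw [gg, wronskian]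

lemma hasDerivAt_gg (l : ℂ) {z : ℂ} (hz : DD l z ≠ 0) : HasDerivAt (gg l) (ggp l z) z := by
  have h1 : HasDerivAt (fun w : ℂ => 2 * (1 + l ^ 2) * l * (1 - w ^ 2))
      (2 * (1 + l ^ 2) * l * (-2 * z)) z := by
    have := ((hasDerivAt_pow 2 z).const_sub 1).const_mul (2 * (1 + l ^ 2) * l)
    refine this.congr_deriv ?_
    push_cast
    ring
  have h2 : HasDerivAt (fun w => (DD l w) ^ 2) (2 * DD l z * DDp l z) z := by
    have := (hasDerivAt_DD l z).pow 2
    refine this.congr_deriv ?_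
    push_cast
    ring
  have h := h1.div h2 (pow_ne_zero 2 hz)
  refine h.congr_deriv ?_
  simp only [ggp, nn]
  field_simp

lemma hasDerivAt_hh (l : ℂ) {z : ℂ} (hz : DD l z ≠ 0) (hz2 : (1 : ℂ) - z ^ 2 ≠ 0) :
    HasDerivAt (hh l) (hhp l z) z := by
  have hnum : HasDerivAt (fun w : ℂ => (-2 * w) * DD l w - 2 * (1 - w ^ 2) * DDp l w)
      (nnp l z) z := by
    have ha : HasDerivAt (fun w : ℂ => (-2 * w) * DD l w)
        ((-2) * DD l z + (-2 * z) * DDp l z) z := by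
      have := (((hasDerivAt_id z).const_mul (-2 : ℂ))).mul (hasDerivAt_DD l z)
      refine this.congr_deriv ?_
      simp only [id_eq]
      ring
    have hb : HasDerivAt (fun w : ℂ => 2 * (1 - w ^ 2) * DDp l w)
        ((2 * (-2 * z)) * DDp l z + (2 * (1 - z ^ 2)) * (2 * l)) z := by
      have hc : HasDerivAt (fun w : ℂ => 2 * (1 - w ^ 2)) (2 * (-2 * z)) z := by
        have := ((hasDerivAt_pow 2 z).const_sub 1).const_mul (2 : ℂ)
        refine this.congr_deriv ?_
        push_cast
        ring
      have hd : HasDerivAt (DDp l) (2 * l) z := by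
        have := ((hasDerivAt_id z).const_mul (2 * l)).sub_const (I * (1 + l ^ 2))
        refine this.congr_deriv ?_
        push_cast
        ring
      have := hc.mul hd
      refine this.congr_deriv ?_; ring
    have := ha.sub hb
    refine this.congr_deriv ?_
    simp only [nnp, DDp]
    ring
  have hden : HasDerivAt (fun w : ℂ => (1 - w ^ 2) * DD l w) (ddp l z) z := by
    have hc : HasDerivAt (fun w : ℂ => (1 : ℂ) - w ^ 2) (-2 * z) z := by
      have := (hasDerivAt_pow 2 z).const_sub 1
      refine this.congr_deriv ?_
      push_cast
      ring
    have := hc.mul (hasDerivAt_DD l z)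
    refine this.congr_deriv ?_; simp only [ddp]
  have h := hnum.div hden (mul_ne_zero hz2 hz)
  have heq : hh l = fun w => ((-2 * w) * DD l w - 2 * (1 - w ^ 2) * DDp l w) /
      ((1 - w ^ 2) * DD l w) := by
    funext w; simp only [hh, nn]
  rw [heq, hhp]
  exact h

lemma deriv_f_eq (l : ℂ) (f : ℂ → ℂ)
    (hf : ∀ z : ℂ, f z = (z * (1 + l ^ 2) - I * l * z ^ 2 - I * l) /
      (l * z ^ 2 - I * (1 + l ^ 2) * z + l))
    {z : ℂ} (hz : DD l z ≠ 0) : deriv f z = gg l z :=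
  (hasDerivAt_f l f hf hz).deriv

lemma eventually_DD_ne (l : ℂ) {z : ℂ} (hz : DD l z ≠ 0) :
    ∀ᶠ w in nhds z, DD l w ≠ 0 :=
  ((hasDerivAt_DD l z).continuousAt).eventually_ne hz

lemma deriv2_f_eq (l : ℂ) (f : ℂ → ℂ)
    (hf : ∀ z : ℂ, f z = (z * (1 + l ^ 2) - I * l * z ^ 2 - I * l) /
      (l * z ^ 2 - I * (1 + l ^ 2) * z + l))
    {z : ℂ} (hz : DD l z ≠ 0) : deriv (deriv f) z = ggp l z := by
  have hev : deriv f =ᶠ[nhds z] gg l :=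
    (eventually_DD_ne l hz).mono fun w hw => deriv_f_eq l f hf hw
  rw [hev.deriv_eq]
  exact (hasDerivAt_gg l hz).deriv

lemma schwarzian_eq (l : ℂ) (f : ℂ → ℂ)
    (hf : ∀ z : ℂ, f z = (z * (1 + l ^ 2) - I * l * z ^ 2 - I * l) /
      (l * z ^ 2 - I * (1 + l ^ 2) * z + l))
    (hl : l ≠ 0) (ha : 1 + l ^ 2 ≠ 0)
    {z : ℂ} (hz : DD l z ≠ 0) (hz2 : (1 : ℂ) - z ^ 2 ≠ 0) :
    schwarzian f z = hhp l z - (1 / 2) * (hh l z) ^ 2 := by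
  have hratio : ∀ w : ℂ, DD l w ≠ 0 → (1 : ℂ) - w ^ 2 ≠ 0 → ggp l w / gg l w = hh l w := by
    intro w hw hw2
    have hggne : gg l w ≠ 0 := by
      simp only [gg]
      exact div_ne_zero (mul_ne_zero (mul_ne_zero (mul_ne_zero two_ne_zero ha) hl) hw2)
        (pow_ne_zero 2 hw)
    rw [div_eq_iff hggne]
    simp only [ggp, gg, hh]
    field_simp
  have hev2 : ∀ᶠ w in nhds z, (1 : ℂ) - w ^ 2 ≠ 0 := by
    have hc : ContinuousAt (fun w : ℂ => 1 - w ^ 2) z := by fun_prop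
    exact hc.eventually_ne hz2
  have heq : (fun w => deriv (deriv f) w / deriv f w) =ᶠ[nhds z] hh l := by
    filter_upwards [eventually_DD_ne l hz, hev2] with w hw hw2
    rw [deriv2_f_eq l f hf hw, deriv_f_eq l f hf hw]
    exact hratio w hw hw2
  rw [schwarzian, heq.deriv_eq, (hasDerivAt_hh l hz hz2).deriv,
    deriv2_f_eq l f hf hz, deriv_f_eq l f hf hz, hratio z hz hz2]

theorem extremal_equality_schwarzian (lam : ℝ) (h0 : 0 < lam) (h1 : lam < 1)
    (f : ℂ → ℂ)
    (hf : ∀ z : ℂ, f z = (z * (1 + (lam : ℂ) ^ 2) - I * lam * z ^ 2 - I * lam) /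
      ((lam : ℂ) * z ^ 2 - I * (1 + (lam : ℂ) ^ 2) * z + lam))
    (z₁ z₂ w₁ w₂ : ℂ)
    (hz₁ : z₁ = -(lam : ℂ)) (hz₂ : z₂ = (lam : ℂ))
    (hw₁ : w₁ = f z₁) (hw₂ : w₂ = f z₂)
    (hw₁' : w₁ = -1) (hw₂' : w₂ = 1) :
    (schwarzian f z₁ * (w₂ - w₁) ^ 2 / (6 * (deriv f z₁) ^ 2) +
      schwarzian f z₂ * (w₂ - w₁) ^ 2 / (6 * (deriv f z₂) ^ 2) +
      2 * (w₂ - w₁) ^ 2 / (deriv f z₁ * deriv f z₂ * (z₁ - z₂) ^ 2) +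
      2 * (‖w₂ - w₁‖ ^ 2 : ℂ) /
        (deriv f z₁ * (starRingEnd ℂ) (deriv f z₂) * (1 - z₁ * (starRingEnd ℂ) z₂) ^ 2)).re =
    2 + ‖w₂ - w₁‖ ^ 2 /
          (‖deriv f z₁‖ ^ 2 * (1 - ‖z₁‖ ^ 2) ^ 2) +
        ‖w₂ - w₁‖ ^ 2 /
          (‖deriv f z₂‖ ^ 2 * (1 - ‖z₂‖ ^ 2) ^ 2) := by
  subst hz₁ hz₂
  -- basic nonvanishing facts
  have hm : (0:ℝ) < 1 - lam ^ 2 := by nlinarith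
  have ha : (0:ℝ) < 1 + lam ^ 2 := by positivity
  have hr : (0:ℝ) < (1 - lam ^ 2) / (lam * (1 + lam ^ 2)) := by positivity
  obtain ⟨r, hrdef⟩ : ∃ r : ℝ, r = (1 - lam ^ 2) / (lam * (1 + lam ^ 2)) := ⟨_, rfl⟩
  rw [← hrdef] at hr
  have hlamc : ((lam : ℂ)) ≠ 0 := ofReal_ne_zero.mpr (ne_of_gt h0)
  have hac : (1 : ℂ) + (lam : ℂ) ^ 2 ≠ 0 := by
    rw [show (1 : ℂ) + (lam : ℂ) ^ 2 = ((1 + lam ^ 2 : ℝ) : ℂ) by push_cast; ring]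
    exact ofReal_ne_zero.mpr (ne_of_gt ha)
  have hmc : (1 : ℂ) - (lam : ℂ) ^ 2 ≠ 0 := by
    rw [show (1 : ℂ) - (lam : ℂ) ^ 2 = ((1 - lam ^ 2 : ℝ) : ℂ) by push_cast; ring]
    exact ofReal_ne_zero.mpr (ne_of_gt hm)
  have hmc' : (1 : ℂ) - (-(lam : ℂ)) ^ 2 ≠ 0 := by
    rw [show (1 : ℂ) - (-(lam : ℂ)) ^ 2 = 1 - (lam : ℂ) ^ 2 by ring]
    exact hmc
  have h1mI : (1 : ℂ) - I ≠ 0 := by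
    intro h; simpa using congrArg Complex.im h
  have h1pI : (1 : ℂ) + I ≠ 0 := by
    intro h; simpa using congrArg Complex.im h
  have hKc : ((lam * (1 + lam ^ 2) : ℝ) : ℂ) ≠ 0 :=
    ofReal_ne_zero.mpr (by positivity)
  have hDD2 : DD (lam : ℂ) (lam : ℂ) ≠ 0 := by
    rw [show DD (lam : ℂ) (lam : ℂ) = ((lam * (1 + lam ^ 2) : ℝ) : ℂ) * (1 - I) by
      simp only [DD]; push_cast; ring]
    exact mul_ne_zero hKc h1mI
  have hDD1 : DD (lam : ℂ) (-(lam : ℂ)) ≠ 0 := by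
    rw [show DD (lam : ℂ) (-(lam : ℂ)) = ((lam * (1 + lam ^ 2) : ℝ) : ℂ) * (1 + I) by
      simp only [DD]; push_cast; ring]
    exact mul_ne_zero hKc h1pI
  -- derivative values
  have hd2 : deriv f (lam : ℂ) = I * (r : ℂ) := by
    rw [deriv_f_eq (lam : ℂ) f hf hDD2]
    rw [hrdef, Complex.ofReal_div, ← mul_div_assoc, gg,
      div_eq_div_iff (pow_ne_zero 2 hDD2) hKc]
    simp only [DD]
    push_cast
    linear_combination (2*(lam:ℂ)^2 + 2*(lam:ℂ)^4 - 2*(lam:ℂ)^6 - 2*(lam:ℂ)^8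
      - I*(lam:ℂ)^2 - I*(lam:ℂ)^4 + I*(lam:ℂ)^6 + I*(lam:ℂ)^8) * Complex.I_sq
  have hd1 : deriv f (-(lam : ℂ)) = -(I * (r : ℂ)) := by
    rw [deriv_f_eq (lam : ℂ) f hf hDD1]
    rw [hrdef, Complex.ofReal_div, ← mul_div_assoc, ← neg_div, gg,
      div_eq_div_iff (pow_ne_zero 2 hDD1) hKc]
    simp only [DD]
    push_cast
    linear_combination (2*(lam:ℂ)^2 + 2*(lam:ℂ)^4 - 2*(lam:ℂ)^6 - 2*(lam:ℂ)^8
      + I*(lam:ℂ)^2 + I*(lam:ℂ)^4 - I*(lam:ℂ)^6 - I*(lam:ℂ)^8) * Complex.I_sq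
  -- schwarzian values
  have hSval : ∀ z : ℂ, DD (lam : ℂ) z ≠ 0 → (1 : ℂ) - z ^ 2 ≠ 0 →
      (hhp (lam : ℂ) z - (1/2) * (hh (lam : ℂ) z) ^ 2) * ((1 : ℂ) - z ^ 2) ^ 2 =
        hhp (lam : ℂ) z * ((1 : ℂ) - z ^ 2) ^ 2
          - (1/2) * (hh (lam : ℂ) z) ^ 2 * ((1 : ℂ) - z ^ 2) ^ 2 := by
    intro z _ _; ring
  have hs2 : schwarzian f (lam : ℂ) = ((-6 / (1 - lam ^ 2) ^ 2 : ℝ) : ℂ) := by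
    rw [schwarzian_eq (lam : ℂ) f hf hlamc hac hDD2 hmc]
    have hdne : ((1 : ℂ) - (lam : ℂ) ^ 2) * DD (lam : ℂ) (lam : ℂ) ≠ 0 :=
      mul_ne_zero hmc hDD2
    have hcomb : hhp (lam : ℂ) (lam : ℂ) - (1/2) * (hh (lam : ℂ) (lam : ℂ)) ^ 2 =
        (2 * (nnp (lam : ℂ) (lam : ℂ) * (((1 : ℂ) - (lam : ℂ) ^ 2) * DD (lam : ℂ) (lam : ℂ))
            - nn (lam : ℂ) (lam : ℂ) * ddp (lam : ℂ) (lam : ℂ))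
          - (nn (lam : ℂ) (lam : ℂ)) ^ 2) /
          (2 * (((1 : ℂ) - (lam : ℂ) ^ 2) * DD (lam : ℂ) (lam : ℂ)) ^ 2) := by
      simp only [hhp, hh]
      field_simp
    rw [hcomb]
    rw [show ((-6 / (1 - lam ^ 2) ^ 2 : ℝ) : ℂ) = -6 / ((1:ℂ) - (lam:ℂ) ^ 2) ^ 2 by
      push_cast; ring]
    rw [div_eq_div_iff (mul_ne_zero two_ne_zero (pow_ne_zero 2 hdne))
      (pow_ne_zero 2 hmc)]
    simp only [nn, nnp, ddp, DD, DDp]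
    ring
  have hs1 : schwarzian f (-(lam : ℂ)) = ((-6 / (1 - lam ^ 2) ^ 2 : ℝ) : ℂ) := by
    rw [schwarzian_eq (lam : ℂ) f hf hlamc hac hDD1 hmc']
    have hdne : ((1 : ℂ) - (-(lam : ℂ)) ^ 2) * DD (lam : ℂ) (-(lam : ℂ)) ≠ 0 :=
      mul_ne_zero hmc' hDD1
    have hcomb : hhp (lam : ℂ) (-(lam : ℂ)) - (1/2) * (hh (lam : ℂ) (-(lam : ℂ))) ^ 2 =
        (2 * (nnp (lam : ℂ) (-(lam : ℂ)) * (((1 : ℂ) - (-(lam : ℂ)) ^ 2) * DD (lam : ℂ) (-(lam : ℂ)))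
            - nn (lam : ℂ) (-(lam : ℂ)) * ddp (lam : ℂ) (-(lam : ℂ)))
          - (nn (lam : ℂ) (-(lam : ℂ))) ^ 2) /
          (2 * (((1 : ℂ) - (-(lam : ℂ)) ^ 2) * DD (lam : ℂ) (-(lam : ℂ))) ^ 2) := by
      simp only [hhp, hh]
      field_simp
    rw [hcomb]
    rw [show ((-6 / (1 - lam ^ 2) ^ 2 : ℝ) : ℂ) = -6 / ((1:ℂ) - (-(lam:ℂ)) ^ 2) ^ 2 by
      push_cast; ring]
    rw [div_eq_div_iff (mul_ne_zero two_ne_zero (pow_ne_zero 2 hdne))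
      (pow_ne_zero 2 hmc')]
    simp only [nn, nnp, ddp, DD, DDp]
    ring
  -- absolute values
  have hw2w1 : w₂ - w₁ = 2 := by rw [hw₁', hw₂']; norm_num
  have habs2 : ‖w₂ - w₁‖ = 2 := by rw [hw2w1]; exact Complex.norm_two
  have habsd2 : ‖deriv f (lam : ℂ)‖ = r := by
    rw [hd2, norm_mul, Complex.norm_I, Complex.norm_real, Real.norm_eq_abs, one_mul, abs_of_pos hr]
  have habsd1 : ‖deriv f (-(lam : ℂ))‖ = r := by
    rw [hd1, norm_neg, norm_mul, Complex.norm_I, Complex.norm_real, Real.norm_eq_abs, one_mul,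
      abs_of_pos hr]
  have habsz1 : ‖(-(lam : ℂ))‖ = lam := by
    rw [norm_neg, Complex.norm_real, Real.norm_eq_abs, abs_of_pos h0]
  have habsz2 : ‖((lam : ℂ))‖ = lam := by
    rw [Complex.norm_real, Real.norm_eq_abs, abs_of_pos h0]
  have hconj2 : (starRingEnd ℂ) (deriv f (lam : ℂ)) = -(I * (r : ℂ)) := by
    rw [hd2, map_mul, Complex.conj_I, Complex.conj_ofReal]; ring
  have hconjz : (starRingEnd ℂ) ((lam : ℂ)) = (lam : ℂ) := Complex.conj_ofReal lam
  rw [hconj2, hconjz, habsd1, habsd2, habs2, habsz1, habsz2, hs1, hs2, hd1, hd2, hw2w1]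
  have hrc : ((r : ℝ) : ℂ) ≠ 0 := ofReal_ne_zero.mpr (ne_of_gt hr)
  have e1 : (-(I * (r : ℂ))) ^ 2 = -((r : ℂ) ^ 2) := by
    linear_combination (r : ℂ) ^ 2 * Complex.I_sq
  have e2 : (I * (r : ℂ)) ^ 2 = -((r : ℂ) ^ 2) := by
    linear_combination (r : ℂ) ^ 2 * Complex.I_sq
  have e3 : (-(I * (r : ℂ))) * (I * (r : ℂ)) = (r : ℂ) ^ 2 := by
    linear_combination (-(r : ℂ) ^ 2) * Complex.I_sq
  have e4 : (-(I * (r : ℂ))) * (-(I * (r : ℂ))) = -((r : ℂ) ^ 2) := by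
    linear_combination (r : ℂ) ^ 2 * Complex.I_sq
  rw [e1, e2, e3, e4]
  rw [← Complex.ofReal_re (2 + 2 ^ 2 / (r ^ 2 * (1 - lam ^ 2) ^ 2)
      + 2 ^ 2 / (r ^ 2 * (1 - lam ^ 2) ^ 2) : ℝ)]
  congr 1
  norm_cast
  push_cast
  rw [hrdef]
  rw [show ((-lam - lam : ℝ)) ^ 2 = 4 * lam ^ 2 by ring,
      show ((1:ℝ) - -lam * lam) = 1 + lam ^ 2 by ring, div_pow]
  field_simp
  ring
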